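/- Let H ∈ (0, 1/2), s_H as above, and q ≥ 1 an integer. Then ∑_{k∈ℤ} s_H(k)^{2q+1} > 0. -/

import Mathlib

open Real Finset

private lemma aux_concave {p x : ℝ} (hp0 : 0 < p) (hp1 : p < 1) (hx : 1 ≤ x) :
    (x + 1) ^ p + (x - 1) ^ p ≤ 2 * x ^ p := by
  have h1 : (x + 1 : ℝ) ∈ Set.Ici (0 : ℝ) := by simp only [Set.mem_Ici]; linarith
  have h2 : (x - 1 : ℝ) ∈ Set.Ici (0 : ℝ) := by simp only [Set.mem_Ici]; linarith
  have hc := (Real.concaveOn_rpow hp0.le hp1.le).2 h1 h2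
    (by norm_num : (0:ℝ) ≤ 1/2) (by norm_num : (0:ℝ) ≤ 1/2) (by norm_num)
  simp only [smul_eq_mul] at hc
  have he : (1/2 : ℝ) * (x + 1) + (1/2 : ℝ) * (x - 1) = x := by ring
  rw [he] at hc
  linarith

private lemma aux_sub {p x : ℝ} (hp0 : 0 ≤ p) (hp1 : p ≤ 1) (hx : 0 ≤ x) :
    (x + 1) ^ p ≤ x ^ p + 1 := by
  lift x to NNReal using hx
  have h := NNReal.rpow_add_le_add_rpow x 1 hp0 hp1
  have h2 : ((x + 1 : NNReal) : ℝ) ^ p ≤ ((x : NNReal) : ℝ) ^ p + ((1 : NNReal) : ℝ) ^ p := by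
    rw [← NNReal.coe_rpow, ← NNReal.coe_rpow, ← NNReal.coe_rpow]
    exact_mod_cast h
  simpa using h2

/-- For `H ∈ (0,1/2)`, `s_H(k) = (1/4)(|k+1|^{2H} + |k-1|^{2H} - 2|k|^{2H})` and
any integer `q ≥ 1`, the series `∑_{k∈ℤ} s_H(k)^{2q+1}` is (convergent and) positive. -/
theorem sH_odd_power_sum_pos (H : ℝ) (h0 : 0 < H) (h1 : H < 1 / 2) (q : ℕ) (hq : 1 ≤ q) :
    0 < ∑' k : ℤ,
      ((|(k : ℝ) + 1| ^ (2 * H) + |(k : ℝ) - 1| ^ (2 * H)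
          - 2 * |(k : ℝ)| ^ (2 * H)) / 4) ^ (2 * q + 1) := by
  have hp0 : 0 < 2 * H := by linarith
  have hp1 : 2 * H < 1 := by linarith
  set p : ℝ := 2 * H with hp
  set F : ℤ → ℝ := fun k =>
    ((|(k : ℝ) + 1| ^ p + |(k : ℝ) - 1| ^ p - 2 * |(k : ℝ)| ^ p) / 4) ^ (2 * q + 1) with hF
  show 0 < ∑' k : ℤ, F k
  clear_value F
  have hodd : Odd (2 * q + 1) := ⟨q, by ring⟩
  -- the telescoping sequence
  set b : ℕ → ℝ := fun n => ((n : ℝ) + 1) ^ p - (n : ℝ) ^ p with hb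
  set u : ℕ → ℝ := fun n => (b n - b (n + 1)) / 4 with hu
  clear_value u
  clear_value b
  have hb0 : ∀ n : ℕ, 0 ≤ b n := by
    intro n
    have := Real.rpow_le_rpow (Nat.cast_nonneg n)
      (by linarith [Nat.cast_nonneg (α := ℝ) n] : (n:ℝ) ≤ (n:ℝ) + 1) hp0.le
    simp only [hb]; linarith
  have hb1 : ∀ n : ℕ, b n ≤ 1 := by
    intro n
    have := aux_sub hp0.le hp1.le (Nat.cast_nonneg (α := ℝ) n)
    simp only [hb]; linarith
  have hu0 : ∀ n : ℕ, 0 ≤ u n := by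
    intro n
    have hc := aux_concave hp0 hp1 (by linarith [Nat.cast_nonneg (α := ℝ) n] : 1 ≤ (n:ℝ) + 1)
    have he : ((n : ℝ) + 1) - 1 = (n : ℝ) := by ring
    rw [he] at hc
    simp only [hu, hb]
    push_cast
    linarith
  have hu14 : ∀ n : ℕ, u n ≤ 1 / 4 := by
    intro n
    have := hb0 (n + 1)
    have := hb1 n
    simp only [hu]; linarith
  have hsum_range : ∀ N : ℕ, ∑ n ∈ range N, u n ≤ 1 / 4 := by
    intro N
    have ht : ∑ n ∈ range N, (b n - b (n + 1)) = b 0 - b N := Finset.sum_range_sub' b N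
    have : ∑ n ∈ range N, u n = (b 0 - b N) / 4 := by
      simp only [hu]
      rw [← Finset.sum_div, ht]
    rw [this]
    have h0' : b 0 ≤ 1 := hb1 0
    have := hb0 N
    linarith
  have hSu : Summable u := summable_of_sum_range_le hu0 hsum_range
  have htu : ∑' n, u n ≤ 1 / 4 := Real.tsum_le_of_sum_range_le hu0 hsum_range
  -- values of F
  have hF0 : F 0 = (1 / 2) ^ (2 * q + 1) := by
    simp only [hF, Int.cast_zero, zero_add, zero_sub, abs_one, abs_neg, abs_zero,
      Real.one_rpow, Real.zero_rpow (ne_of_gt hp0)]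
    norm_num
  have hFn : ∀ n : ℕ, F ((n : ℤ) + 1) = -(u n ^ (2 * q + 1)) := by
    intro n
    have e1 : |((((n : ℤ) + 1) : ℤ) : ℝ) + 1| = (n : ℝ) + 1 + 1 := by
      push_cast; rw [abs_of_nonneg (by positivity)]
    have e2 : |((((n : ℤ) + 1) : ℤ) : ℝ) - 1| = (n : ℝ) := by
      push_cast
      have : (n : ℝ) + 1 - 1 = (n : ℝ) := by ring
      rw [this, abs_of_nonneg (Nat.cast_nonneg n)]
    have e3 : |((((n : ℤ) + 1) : ℤ) : ℝ)| = (n : ℝ) + 1 := by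
      push_cast; rw [abs_of_nonneg (by positivity)]
    simp only [hF]
    rw [e1, e2, e3]
    have e4 : (((n : ℝ) + 1 + 1) ^ p + (n : ℝ) ^ p - 2 * ((n : ℝ) + 1) ^ p) / 4 = -(u n) := by
      simp only [hu, hb]
      push_cast
      ring
    rw [e4, hodd.neg_pow]
  have hFsymm : ∀ k : ℤ, F (-k) = F k := by
    intro k
    simp only [hF]
    have e1 : ((-k : ℤ) : ℝ) + 1 = -((k : ℝ) - 1) := by push_cast; ring
    have e2 : ((-k : ℤ) : ℝ) - 1 = -((k : ℝ) + 1) := by push_cast; ring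
    have e3 : ((-k : ℤ) : ℝ) = -(k : ℝ) := by push_cast; ring
    rw [e1, e2, e3, abs_neg, abs_neg, abs_neg]
    ring
  -- summability
  have habs : ∀ n : ℕ, |F ((n : ℤ) + 1)| ≤ (1 / 4) ^ (2 * q) * u n := by
    intro n
    rw [hFn n, abs_neg, abs_of_nonneg (pow_nonneg (hu0 n) _)]
    calc u n ^ (2 * q + 1) = u n ^ (2 * q) * u n := by rw [pow_succ]
      _ ≤ (1 / 4) ^ (2 * q) * u n := by
          apply mul_le_mul_of_nonneg_right _ (hu0 n)
          exact pow_le_pow_left₀ (hu0 n) (hu14 n) _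
  have hS1 : Summable fun n : ℕ => F ((n : ℤ) + 1) := by
    apply Summable.of_abs
    apply Summable.of_nonneg_of_le (fun n => abs_nonneg _) habs
    exact hSu.mul_left _
  have hSnat : Summable fun n : ℕ => F (n : ℤ) := by
    rw [← summable_nat_add_iff 1]
    exact_mod_cast hS1
  have hSneg : Summable fun n : ℕ => F (-((n : ℤ) + 1)) := by
    convert hS1 using 2 with n
    rw [hFsymm]
  -- assemble
  rw [tsum_of_nat_of_neg_add_one hSnat hSneg]
  have hA1 : ∑' n : ℕ, F (-((n : ℤ) + 1)) = ∑' n : ℕ, F ((n : ℤ) + 1) := by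
    congr 1 with n
    rw [hFsymm]
  have hA2 : ∑' n : ℕ, F (n : ℤ) = F 0 + ∑' n : ℕ, F ((n : ℤ) + 1) := by
    rw [Summable.tsum_eq_zero_add hSnat]
    norm_num
  rw [hA1, hA2, hF0]
  set A : ℝ := ∑' n : ℕ, F ((n : ℤ) + 1) with hA
  -- bound |A|
  have hAbound : |A| ≤ (1 / 4) ^ (2 * q) * (1 / 4) := by
    have h1 : |A| ≤ ∑' n : ℕ, |F ((n : ℤ) + 1)| := by
      simpa using norm_tsum_le_tsum_norm (f := fun n : ℕ => F ((n : ℤ) + 1))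
        (by simpa using hS1.abs)
    have h2 : ∑' n : ℕ, |F ((n : ℤ) + 1)| ≤ ∑' n : ℕ, (1 / 4 : ℝ) ^ (2 * q) * u n :=
      Summable.tsum_le_tsum habs (by
        apply Summable.of_nonneg_of_le (fun n => abs_nonneg _) habs
        exact hSu.mul_left _) (hSu.mul_left _)
    have h3 : ∑' n : ℕ, (1 / 4 : ℝ) ^ (2 * q) * u n = (1 / 4) ^ (2 * q) * ∑' n, u n :=
      tsum_mul_left
    have h4 : (1 / 4 : ℝ) ^ (2 * q) * ∑' n, u n ≤ (1 / 4) ^ (2 * q) * (1 / 4) :=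
      mul_le_mul_of_nonneg_left htu (by positivity)
    linarith
  -- final arithmetic
  have hlt : ((1 : ℝ) / 4) ^ (2 * q) < (1 / 4) ^ q :=
    pow_lt_pow_right_of_lt_one₀ (by norm_num) (by norm_num) (by omega)
  have heq : ((1 : ℝ) / 2) ^ (2 * q + 1) = (1 / 2) * (1 / 4) ^ q := by
    rw [pow_succ, pow_mul]
    norm_num
    ring
  have habsA := abs_le.mp hAbound
  rw [heq]
  nlinarith [habsA.1, hlt]
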